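/- For every integer n ≥ 6 divisible by 3 there is an instance of binary, symmetric Seat Arrangement whose price of fairness is at least n/4 + 1/12. Concretely, let the agents be P = P_K ⊔ P_C with |P_K| = |P_C| = n and fix a cyclic order c_1, …, c_n of P_C; let f_p(q) = 1 for all distinct p, q ∈ P_K, f_{c_i}(c_{i+1}) = f_{c_{i+1}}(c_i) = 1 for every i (indices modulo n), and all other preferences be 0; and let the seat graph G be the disjoint union of a clique K_n and n/3 disjoint triangles. Then every maximin arrangement π_f satisfies sw(π_f) = 4n and the maximum social welfare is at least n² + n/3; hence max_π sw(π) ≥ (n/4 + 1/12) · sw(π_f) for every maximin arrangement π_f. -/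

import Mathlib

open scoped Classical

noncomputable section

namespace SeatArrangement

variable {P V : Type*}

/-- The utility of agent `p` under arrangement `π`:
the sum, over the seat-graph neighbors `v` of `π p`, of `p`'s preference for the agent seated
at `v`. -/
def utility [Fintype V] (G : SimpleGraph V) (f : P → P → ℝ) (π : P ≃ V) (p : P) : ℝ :=
  ∑ v : V, if G.Adj (π p) v then f p (π.symm v) else 0

/-- The social welfare of an arrangement: the sum of the utilities of all agents. -/
def sw [Fintype P] [Fintype V] (G : SimpleGraph V) (f : P → P → ℝ) (π : P ≃ V) : ℝ :=
  ∑ p : P, utility G f π p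

/-- The `(p,q)`-swap arrangement of `π`. -/
def swapArr (π : P ≃ V) (p q : P) : P ≃ V := (Equiv.swap p q).trans π

/-- `{p, q}` is a blocking pair for `π`: both agents strictly improve by swapping seats. -/
def blocking [Fintype V] (G : SimpleGraph V) (f : P → P → ℝ) (π : P ≃ V) (p q : P) : Prop :=
  p ≠ q ∧ utility G f π p < utility G f (swapArr π p q) p
        ∧ utility G f π q < utility G f (swapArr π p q) q

/-- An arrangement is stable if it has no blocking pair. -/
def stable [Fintype V] (G : SimpleGraph V) (f : P → P → ℝ) (π : P ≃ V) : Prop :=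
  ∀ p q : P, ¬ blocking G f π p q

/-- An arrangement is envy-free if no agent would strictly improve by taking
another agent's seat (via a swap). -/
def envyFree [Fintype V] (G : SimpleGraph V) (f : P → P → ℝ) (π : P ≃ V) : Prop :=
  ∀ p q : P, p ≠ q → utility G f (swapArr π p q) p ≤ utility G f π p

/-- The least utility of an agent under `π` (for a finite nonempty set of agents, the
infimum of the range of utilities is the minimum utility). -/
def minUtil [Fintype V] (G : SimpleGraph V) (f : P → P → ℝ) (π : P ≃ V) : ℝ :=
  sInf (Set.range (utility G f π))

/-- A maximin arrangement maximizes the least utility of an agent. -/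
def maximin [Fintype V] (G : SimpleGraph V) (f : P → P → ℝ) (πf : P ≃ V) : Prop :=
  ∀ π : P ≃ V, minUtil G f π ≤ minUtil G f πf

/-- A maximum arrangement maximizes the social welfare. -/
def maximum [Fintype P] [Fintype V] (G : SimpleGraph V) (f : P → P → ℝ) (πm : P ≃ V) : Prop :=
  ∀ π : P ≃ V, sw G f π ≤ sw G f πm

end SeatArrangement

open SeatArrangement

/-- Preferences for STATEMENT 7: the agents are `P_K ⊕ P_C` with `|P_K| = |P_C| = n`.
Each pair of distinct agents of `P_K` mutually have preference 1; consecutive agents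
`c_i, c_{i+1 mod n}` of the cycle `P_C` mutually have preference 1; all other
preferences are 0 (binary and symmetric). -/
def prefs7 (n : ℕ) : (Fin n ⊕ Fin n) → (Fin n ⊕ Fin n) → ℝ
  | .inl a, .inl b => if a ≠ b then 1 else 0
  | .inr a, .inr b => if b.val = (a.val + 1) % n ∨ a.val = (b.val + 1) % n then 1 else 0
  | _, _ => 0

/-- Seat graph for STATEMENT 7: the disjoint union of a clique `K_n` and `n/3` disjoint
triangles (`3 ∣ n`), grouping vertices with the same value of `⌊·/3⌋`. -/
def seat7 (n : ℕ) : SimpleGraph (Fin n ⊕ Fin n) :=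
  (⊤ : SimpleGraph (Fin n)) ⊕g
    SimpleGraph.fromRel (fun a b : Fin n => a.val / 3 = b.val / 3)

namespace PoF7
open Finset

variable {n : ℕ}

lemma mod_two_cases {x : ℕ} (hn : 0 < n) (h : x < 2*n) :
    x % n = if x < n then x else x - n := by
  split_ifs with h1
  · exact Nat.mod_eq_of_lt h1
  · rw [Nat.mod_eq_sub_mod (le_of_not_gt h1), Nat.mod_eq_of_lt (by omega)]

lemma no_cyc_triangle (hn : 6 ≤ n) (a b c : Fin n)
    (hab : a ≠ b) (hac : a ≠ c) (hbc : b ≠ c)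
    (h1 : b.val = (a.val+1)%n ∨ a.val = (b.val+1)%n)
    (h2 : c.val = (a.val+1)%n ∨ a.val = (c.val+1)%n)
    (h3 : c.val = (b.val+1)%n ∨ b.val = (c.val+1)%n) : False := by
  have ha := a.isLt; have hb := b.isLt; have hc := c.isLt
  have ma := mod_two_cases (n := n) (x := a.val+1) (by omega) (by omega)
  have mb := mod_two_cases (n := n) (x := b.val+1) (by omega) (by omega)
  have mc := mod_two_cases (n := n) (x := c.val+1) (by omega) (by omega)
  have hab' : a.val ≠ b.val := fun h => hab (Fin.ext h)
  have hac' : a.val ≠ c.val := fun h => hac (Fin.ext h)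
  have hbc' : b.val ≠ c.val := fun h => hbc (Fin.ext h)
  simp only [ma, mb, mc] at h1 h2 h3
  split_ifs at h1 h2 h3 <;> omega

lemma card_cyc_nbrs (hn : 6 ≤ n) (c : Fin n) :
    (univ.filter fun d : Fin n => c ≠ d ∧ (d.val = (c.val+1)%n ∨ c.val = (d.val+1)%n)).card = 2 := by
  have hc := c.isLt
  have hd1 : (c.val+1)%n < n := Nat.mod_lt _ (by omega)
  have hd2 : (c.val+(n-1))%n < n := Nat.mod_lt _ (by omega)
  have m1 := mod_two_cases (x := c.val+1) (n := n) (by omega) (by omega)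
  have m2 := mod_two_cases (x := c.val+(n-1)) (n := n) (by omega) (by omega)
  have heq : (univ.filter fun d : Fin n => c ≠ d ∧ (d.val = (c.val+1)%n ∨ c.val = (d.val+1)%n))
      = {⟨(c.val+1)%n, hd1⟩, ⟨(c.val+(n-1))%n, hd2⟩} := by
    ext d
    have hdl := d.isLt
    have m3 := mod_two_cases (x := d.val+1) (n := n) (by omega) (by omega)
    simp only [mem_filter, mem_univ, true_and, mem_insert, mem_singleton, Fin.ext_iff, ne_eq,
      m1, m2, m3]
    split_ifs <;> omega
  rw [heq, card_insert_of_notMem, card_singleton]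
  simp only [mem_singleton, Fin.ext_iff, m1, m2]
  split_ifs <;> omega

lemma card_res1 (h3 : 3 ∣ n) :
    (univ.filter fun c : Fin n => c.val % 3 = 1).card = n/3 := by
  rw [← Fintype.card_fin (n/3), ← Finset.card_univ]
  refine Finset.card_nbij' (i := fun c : Fin n => (⟨c.val/3, by have := c.isLt; omega⟩ : Fin (n/3)))
    (j := fun b : Fin (n/3) => (⟨3*b.val+1, by have := b.isLt; omega⟩ : Fin n)) ?_ ?_ ?_ ?_
  · intro a ha; exact mem_univ _
  · intro b hb; simp only [mem_coe, mem_filter, mem_univ, true_and]; omega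
  · intro a ha; simp only [mem_coe, mem_filter, mem_univ, true_and] at ha
    exact Fin.ext (by simp only []; omega)
  · intro b hb; exact Fin.ext (by simp only []; omega)

lemma card_tri_mates (hn : 6 ≤ n) (h3 : 3 ∣ n) (a : Fin n) :
    (univ.filter fun i : Fin n => a ≠ i ∧ a.val/3 = i.val/3).card = 2 := by
  have ha := a.isLt
  have hb0 : 3*(a.val/3) < n := by omega
  have hb1 : 3*(a.val/3)+1 < n := by omega
  have hb2 : 3*(a.val/3)+2 < n := by omega
  have heq : (univ.filter fun i : Fin n => a.val/3 = i.val/3)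
      = {⟨3*(a.val/3), hb0⟩, ⟨3*(a.val/3)+1, hb1⟩, ⟨3*(a.val/3)+2, hb2⟩} := by
    ext i; have hi := i.isLt
    simp only [mem_filter, mem_univ, true_and, mem_insert, mem_singleton, Fin.ext_iff]
    omega
  have h2 : (univ.filter fun i : Fin n => a ≠ i ∧ a.val/3 = i.val/3)
      = (univ.filter fun i : Fin n => a.val/3 = i.val/3).erase a := by
    ext i
    simp only [mem_filter, mem_univ, true_and, mem_erase, ne_eq, Fin.ext_iff]
    omega
  have hmem : a ∈ (univ.filter fun i : Fin n => a.val/3 = i.val/3) := by simp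
  have hcard3 : (univ.filter fun i : Fin n => a.val/3 = i.val/3).card = 3 := by
    rw [heq, card_insert_of_notMem (by simp [Fin.ext_iff]),
      card_insert_of_notMem (by simp [Fin.ext_iff]), card_singleton]
  rw [h2, card_erase_of_mem hmem, hcard3]

lemma adj_ll (s i : Fin n) : (seat7 n).Adj (.inl s) (.inl i) ↔ s ≠ i := by simp [seat7]

lemma adj_rr (s i : Fin n) : (seat7 n).Adj (.inr s) (.inr i) ↔ s ≠ i ∧ s.val/3 = i.val/3 := by
  simp [seat7, SimpleGraph.fromRel]; tauto

lemma adj_lr (s i : Fin n) : ¬ (seat7 n).Adj (.inl s) (.inr i) := by simp [seat7]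

lemma adj_rl (s i : Fin n) : ¬ (seat7 n).Adj (.inr s) (.inl i) := by simp [seat7]

lemma prefs_ll (a b : Fin n) : prefs7 n (.inl a) (.inl b) = if a ≠ b then 1 else 0 := rfl

lemma prefs_rr (a b : Fin n) : prefs7 n (.inr a) (.inr b)
    = if b.val = (a.val + 1) % n ∨ a.val = (b.val + 1) % n then 1 else 0 := rfl

lemma prefs_lr (a b : Fin n) : prefs7 n (.inl a) (.inr b) = 0 := rfl

lemma prefs_rl (a b : Fin n) : prefs7 n (.inr a) (.inl b) = 0 := rfl

lemma prefs_mem (p q : Fin n ⊕ Fin n) : prefs7 n p q = 0 ∨ prefs7 n p q = 1 := by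
  rcases p with a|a <;> rcases q with b|b
  · rw [prefs_ll]; split_ifs <;> simp
  · left; rfl
  · left; rfl
  · rw [prefs_rr]; split_ifs <;> simp

lemma util_seat_inl (π : (Fin n ⊕ Fin n) ≃ (Fin n ⊕ Fin n)) {p} {s : Fin n}
    (hp : π p = .inl s) :
    utility (seat7 n) (prefs7 n) π p
      = ∑ i : Fin n, if s ≠ i then prefs7 n p (π.symm (.inl i)) else 0 := by
  simp only [utility, hp]
  rw [Fintype.sum_sum_type]
  rw [Finset.sum_eq_zero (fun i _ => if_neg (adj_lr s i)), add_zero]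
  exact Finset.sum_congr rfl fun i _ => if_congr (adj_ll s i) rfl rfl

lemma util_seat_inr (π : (Fin n ⊕ Fin n) ≃ (Fin n ⊕ Fin n)) {p} {s : Fin n}
    (hp : π p = .inr s) :
    utility (seat7 n) (prefs7 n) π p
      = ∑ i : Fin n, if s ≠ i ∧ s.val/3 = i.val/3 then prefs7 n p (π.symm (.inr i)) else 0 := by
  simp only [utility, hp]
  rw [Fintype.sum_sum_type]
  rw [Finset.sum_eq_zero (fun i _ => if_neg (adj_rl s i)), zero_add]
  exact Finset.sum_congr rfl fun i _ => if_congr (adj_rr s i) rfl rfl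

/-- The swapped arrangement: clique agents to triangles, cycle agents to clique. -/
def pi0 (n : ℕ) : (Fin n ⊕ Fin n) ≃ (Fin n ⊕ Fin n) := Equiv.sumComm (Fin n) (Fin n)

lemma util0_inl (hn : 6 ≤ n) (h3 : 3 ∣ n) (a : Fin n) :
    utility (seat7 n) (prefs7 n) (pi0 n) (.inl a) = 2 := by
  rw [util_seat_inr (pi0 n) (p := .inl a) (s := a) rfl]
  have hcongr : ∀ i ∈ univ, (if a ≠ i ∧ a.val/3 = i.val/3
      then prefs7 n (.inl a) ((pi0 n).symm (.inr i)) else 0)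
      = if a ≠ i ∧ a.val/3 = i.val/3 then (1:ℝ) else 0 := by
    intro i _
    split_ifs with h
    · show prefs7 n (.inl a) (.inl i) = 1
      rw [prefs_ll, if_pos h.1]
    · rfl
  rw [Finset.sum_congr rfl hcongr, Finset.sum_boole, card_tri_mates hn h3 a]
  norm_num

lemma util0_inr (hn : 6 ≤ n) (c : Fin n) :
    utility (seat7 n) (prefs7 n) (pi0 n) (.inr c) = 2 := by
  rw [util_seat_inl (pi0 n) (p := .inr c) (s := c) rfl]
  have hcongr : ∀ i ∈ univ, (if c ≠ i
      then prefs7 n (.inr c) ((pi0 n).symm (.inl i)) else 0)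
      = if c ≠ i ∧ (i.val = (c.val+1)%n ∨ c.val = (i.val+1)%n) then (1:ℝ) else 0 := by
    intro i _
    have : prefs7 n (.inr c) ((pi0 n).symm (.inl i)) = prefs7 n (.inr c) (.inr i) := rfl
    rw [this, prefs_rr]
    split_ifs with h1 h2 h3 h4 <;> first | rfl | (exfalso; tauto)
  rw [Finset.sum_congr rfl hcongr, Finset.sum_boole, card_cyc_nbrs hn c]
  norm_num

lemma minUtil0 (hn : 6 ≤ n) (h3 : 3 ∣ n) :
    minUtil (seat7 n) (prefs7 n) (pi0 n) = 2 := by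
  have h : utility (seat7 n) (prefs7 n) (pi0 n) = fun _ => (2:ℝ) := by
    funext p
    rcases p with a|a
    exacts [util0_inl hn h3 a, util0_inr hn a]
  haveI : Nonempty (Fin n ⊕ Fin n) := ⟨.inl ⟨0, by omega⟩⟩
  rw [minUtil, h, Set.range_const, csInf_singleton]

lemma maximin_util_ge (hn : 6 ≤ n) (h3 : 3 ∣ n)
    (πf : (Fin n ⊕ Fin n) ≃ (Fin n ⊕ Fin n)) (hm : maximin (seat7 n) (prefs7 n) πf)
    (p : Fin n ⊕ Fin n) : (2:ℝ) ≤ utility (seat7 n) (prefs7 n) πf p := by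
  have h1 : (2:ℝ) ≤ minUtil (seat7 n) (prefs7 n) πf := by
    rw [← minUtil0 hn h3]; exact hm _
  exact le_trans h1 (csInf_le (Set.finite_range _).bddBelow ⟨p, rfl⟩)

lemma mate_occupant (hn : 6 ≤ n) (h3 : 3 ∣ n)
    (πf : (Fin n ⊕ Fin n) ≃ (Fin n ⊕ Fin n))
    (h2 : ∀ p, (2:ℝ) ≤ utility (seat7 n) (prefs7 n) πf p)
    {c s : Fin n} (hcs : πf (.inr c) = .inr s)
    {i : Fin n} (hi : s ≠ i ∧ s.val/3 = i.val/3) :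
    ∃ d : Fin n, πf.symm (.inr i) = .inr d ∧ (d.val = (c.val+1)%n ∨ c.val = (d.val+1)%n) := by
  have hu := h2 (.inr c)
  rw [util_seat_inr πf hcs] at hu
  have hle : ∀ j ∈ univ, (if s ≠ j ∧ s.val/3 = j.val/3
        then prefs7 n (.inr c) (πf.symm (.inr j)) else 0)
      ≤ (if s ≠ j ∧ s.val/3 = j.val/3 then (1:ℝ) else 0) := by
    intro j _
    split_ifs
    · rcases prefs_mem (n := n) (.inr c) (πf.symm (.inr j)) with h | h <;> rw [h] <;> norm_num
    · exact le_refl 0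
  have hub : ∑ j : Fin n, (if s ≠ j ∧ s.val/3 = j.val/3 then (1:ℝ) else 0) = 2 := by
    rw [Finset.sum_boole, card_tri_mates hn h3 s]; norm_num
  have hsum : ∑ j : Fin n, (if s ≠ j ∧ s.val/3 = j.val/3
        then prefs7 n (.inr c) (πf.symm (.inr j)) else 0)
      = ∑ j : Fin n, (if s ≠ j ∧ s.val/3 = j.val/3 then (1:ℝ) else 0) := by
    refine le_antisymm (Finset.sum_le_sum hle) ?_
    rw [hub]; exact hu
  have heach := (Finset.sum_eq_sum_iff_of_le hle).1 hsum i (mem_univ i)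
  rw [if_pos hi, if_pos hi] at heach
  rcases hocc : πf.symm (.inr i) with b | d
  · rw [hocc, prefs_rl] at heach; norm_num at heach
  · refine ⟨d, rfl, ?_⟩
    rw [hocc, prefs_rr] at heach
    by_contra hcon
    rw [if_neg hcon] at heach
    norm_num at heach

lemma inr_agents_on_inl (hn : 6 ≤ n) (h3 : 3 ∣ n)
    (πf : (Fin n ⊕ Fin n) ≃ (Fin n ⊕ Fin n))
    (h2 : ∀ p, (2:ℝ) ≤ utility (seat7 n) (prefs7 n) πf p) :
    ∀ c : Fin n, ∃ s : Fin n, πf (.inr c) = .inl s := by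
  intro c
  rcases hcs : πf (.inr c) with s | s
  · exact ⟨s, rfl⟩
  exfalso
  obtain ⟨i1, i2, hne, hT⟩ := Finset.card_eq_two.mp (card_tri_mates hn h3 s)
  have hmem1 : i1 ∈ univ.filter (fun i : Fin n => s ≠ i ∧ s.val/3 = i.val/3) := by
    rw [hT]; simp
  have hmem2 : i2 ∈ univ.filter (fun i : Fin n => s ≠ i ∧ s.val/3 = i.val/3) := by
    rw [hT]; simp
  have hi1 := (Finset.mem_filter.mp hmem1).2
  have hi2 := (Finset.mem_filter.mp hmem2).2
  obtain ⟨d1, hd1, hcd1⟩ := mate_occupant hn h3 πf h2 hcs hi1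
  obtain ⟨d2, hd2, hcd2⟩ := mate_occupant hn h3 πf h2 hcs hi2
  have hcs1 : πf (.inr d1) = .inr i1 := by rw [← hd1, Equiv.apply_symm_apply]
  have hi12 : i1 ≠ i2 ∧ i1.val/3 = i2.val/3 := ⟨hne, hi1.2.symm.trans hi2.2⟩
  obtain ⟨d2', hd2', hdd⟩ := mate_occupant hn h3 πf h2 hcs1 hi12
  have hd2eq : d2' = d2 := Sum.inr_injective (hd2'.symm.trans hd2)
  subst hd2eq
  have hcs2 : πf (.inr d2') = .inr i2 := by rw [← hd2, Equiv.apply_symm_apply]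
  have hne1 : c ≠ d1 := by
    intro h; rw [h, hcs1] at hcs; exact hi1.1 (Sum.inr_injective hcs).symm
  have hne2 : c ≠ d2' := by
    intro h; rw [h, hcs2] at hcs; exact hi2.1 (Sum.inr_injective hcs).symm
  have hne3 : d1 ≠ d2' := by
    intro h; rw [h, hcs2] at hcs1; exact hne (Sum.inr_injective hcs1).symm
  exact no_cyc_triangle hn c d1 d2' hne1 hne2 hne3 hcd1 hcd2 hdd

lemma sw_of_min2 (hn : 6 ≤ n) (h3 : 3 ∣ n)
    (πf : (Fin n ⊕ Fin n) ≃ (Fin n ⊕ Fin n))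
    (h2 : ∀ p, (2:ℝ) ≤ utility (seat7 n) (prefs7 n) πf p) :
    sw (seat7 n) (prefs7 n) πf = 4 * n := by
  choose s hs using inr_agents_on_inl hn h3 πf h2
  have hsinj : Function.Injective s := by
    intro x y h
    have : πf (.inr x) = πf (.inr y) := by rw [hs x, hs y, h]
    exact Sum.inr_injective (πf.injective this)
  have hssurj : Function.Surjective s := Finite.surjective_of_injective hsinj
  have hinl : ∀ a : Fin n, ∃ u : Fin n, πf (.inl a) = .inr u := by
    intro a
    rcases ht : πf (.inl a) with u | u
    · exfalso
      obtain ⟨x, hx⟩ := hssurj u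
      have : πf (.inr x) = πf (.inl a) := by rw [hs x, hx, ht]
      simpa using πf.injective this
    · exact ⟨u, rfl⟩
  choose t ht using hinl
  have hoccl : ∀ d : Fin n, πf.symm (.inl (s d)) = .inr d := fun d => by
    rw [← hs d, Equiv.symm_apply_apply]
  have hoccr : ∀ i : Fin n, ∃ b : Fin n, πf.symm (.inr i) = .inl b := by
    intro i
    rcases hsym : πf.symm (.inr i) with b | d
    · exact ⟨b, rfl⟩
    · exfalso
      have : πf (.inr d) = .inr i := by rw [← hsym, Equiv.apply_symm_apply]
      rw [hs d] at this; simp at this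
  have hUl : ∀ a : Fin n, utility (seat7 n) (prefs7 n) πf (.inl a) = 2 := by
    intro a
    rw [util_seat_inr πf (ht a)]
    have hcongr : ∀ i ∈ univ, (if t a ≠ i ∧ (t a).val/3 = i.val/3
          then prefs7 n (.inl a) (πf.symm (.inr i)) else 0)
        = if t a ≠ i ∧ (t a).val/3 = i.val/3 then (1:ℝ) else 0 := by
      intro i _
      split_ifs with h
      · obtain ⟨b, hb⟩ := hoccr i
        rw [hb, prefs_ll, if_pos]
        intro hab
        apply h.1
        have h1' : πf.symm (.inr i) = .inl a := by rw [hb, hab]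
        have h2' : πf.symm (.inr (t a)) = .inl a := by rw [← ht a, Equiv.symm_apply_apply]
        have := πf.symm.injective (h2'.trans h1'.symm)
        exact Sum.inr_injective this
      · rfl
    rw [Finset.sum_congr rfl hcongr, Finset.sum_boole, card_tri_mates hn h3 (t a)]
    norm_num
  have hUr : ∀ c : Fin n, utility (seat7 n) (prefs7 n) πf (.inr c) = 2 := by
    intro c
    rw [util_seat_inl πf (hs c)]
    rw [← (Function.Bijective.sum_comp ⟨hsinj, hssurj⟩
      (fun i => if s c ≠ i then prefs7 n (.inr c) (πf.symm (.inl i)) else 0))]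
    have hcongr : ∀ d ∈ univ, (if s c ≠ s d then prefs7 n (.inr c) (πf.symm (.inl (s d))) else 0)
        = if c ≠ d ∧ (d.val = (c.val+1)%n ∨ c.val = (d.val+1)%n) then (1:ℝ) else 0 := by
      intro d _
      have hiff : s c ≠ s d ↔ c ≠ d := not_congr ⟨fun h => hsinj h, fun h => by rw [h]⟩
      rw [hoccl d, prefs_rr, if_congr hiff rfl rfl]
      split_ifs <;> first | rfl | (exfalso; tauto)
    rw [Finset.sum_congr rfl hcongr, Finset.sum_boole, card_cyc_nbrs hn c]
    norm_num
  rw [sw, Fintype.sum_sum_type]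
  rw [Finset.sum_congr rfl (fun a _ => hUl a), Finset.sum_congr rfl (fun c _ => hUr c)]
  rw [Finset.sum_const, card_univ, Fintype.card_fin, nsmul_eq_mul]
  ring

lemma util_refl_inl (hn : 6 ≤ n) (a : Fin n) :
    utility (seat7 n) (prefs7 n) (Equiv.refl _) (.inl a) = (n:ℝ) - 1 := by
  rw [util_seat_inl (Equiv.refl _) (p := .inl a) (s := a) rfl]
  have hcongr : ∀ i ∈ univ, (if a ≠ i
        then prefs7 n (.inl a) ((Equiv.refl (Fin n ⊕ Fin n)).symm (.inl i)) else 0)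
      = if a ≠ i then (1:ℝ) else 0 := by
    intro i _
    split_ifs with h
    · show prefs7 n (.inl a) (.inl i) = 1
      rw [prefs_ll, if_pos h]
    · rfl
  rw [Finset.sum_congr rfl hcongr, Finset.sum_boole]
  have hfil : (univ.filter fun i : Fin n => a ≠ i) = univ.erase a := by
    ext i
    simp only [mem_filter, mem_univ, true_and, mem_erase, ne_eq]
    exact ⟨fun h => ⟨fun h' => h h'.symm, trivial⟩, fun h h' => h.1 h'.symm⟩
  rw [hfil, card_erase_of_mem (mem_univ a), card_univ, Fintype.card_fin,
    Nat.cast_sub (by omega), Nat.cast_one]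

lemma util_refl_inr (hn : 6 ≤ n) (h3 : 3 ∣ n) (c : Fin n) :
    utility (seat7 n) (prefs7 n) (Equiv.refl _) (.inr c)
      = if c.val % 3 = 1 then 2 else 1 := by
  rw [util_seat_inr (Equiv.refl _) (p := .inr c) (s := c) rfl]
  have hcongr : ∀ i ∈ univ, (if c ≠ i ∧ c.val/3 = i.val/3
        then prefs7 n (.inr c) ((Equiv.refl (Fin n ⊕ Fin n)).symm (.inr i)) else 0)
      = if c ≠ i ∧ c.val/3 = i.val/3 ∧ (i.val = (c.val+1)%n ∨ c.val = (i.val+1)%n)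
        then (1:ℝ) else 0 := by
    intro i _
    have hr : prefs7 n (.inr c) ((Equiv.refl (Fin n ⊕ Fin n)).symm (.inr i))
        = prefs7 n (.inr c) (.inr i) := rfl
    rw [hr, prefs_rr]
    split_ifs <;> first | rfl | (exfalso; tauto)
  rw [Finset.sum_congr rfl hcongr, Finset.sum_boole]
  have hc := c.isLt
  have m1 := mod_two_cases (n := n) (x := c.val+1) (by omega) (by omega)
  have hcases : c.val % 3 = 0 ∨ c.val % 3 = 1 ∨ c.val % 3 = 2 := by omega
  rcases hcases with hr3 | hr3 | hr3
  · have hlt : c.val + 1 < n := by omega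
    have hfil : (univ.filter fun i : Fin n => c ≠ i ∧ c.val/3 = i.val/3 ∧
          (i.val = (c.val+1)%n ∨ c.val = (i.val+1)%n)) = {⟨c.val+1, hlt⟩} := by
      ext i; have hi := i.isLt
      have m3 := mod_two_cases (n := n) (x := i.val+1) (by omega) (by omega)
      simp only [mem_filter, mem_univ, true_and, mem_singleton, Fin.ext_iff, ne_eq, m1, m3]
      split_ifs <;> omega
    rw [hfil, card_singleton, if_neg (by omega)]; norm_num
  · have hlt1 : c.val + 1 < n := by omega
    have hlt2 : c.val - 1 < n := by omega
    have hfil : (univ.filter fun i : Fin n => c ≠ i ∧ c.val/3 = i.val/3 ∧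
          (i.val = (c.val+1)%n ∨ c.val = (i.val+1)%n))
        = {⟨c.val-1, hlt2⟩, ⟨c.val+1, hlt1⟩} := by
      ext i; have hi := i.isLt
      have m3 := mod_two_cases (n := n) (x := i.val+1) (by omega) (by omega)
      simp only [mem_filter, mem_univ, true_and, mem_insert, mem_singleton, Fin.ext_iff, ne_eq,
        m1, m3]
      split_ifs <;> omega
    rw [hfil, card_insert_of_notMem (by simp only [mem_singleton, Fin.ext_iff]; omega),
      card_singleton, if_pos hr3]
    norm_num
  · have hlt2 : c.val - 1 < n := by omega
    have hfil : (univ.filter fun i : Fin n => c ≠ i ∧ c.val/3 = i.val/3 ∧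
          (i.val = (c.val+1)%n ∨ c.val = (i.val+1)%n)) = {⟨c.val-1, hlt2⟩} := by
      ext i; have hi := i.isLt
      have m3 := mod_two_cases (n := n) (x := i.val+1) (by omega) (by omega)
      simp only [mem_filter, mem_univ, true_and, mem_singleton, Fin.ext_iff, ne_eq, m1, m3]
      split_ifs <;> omega
    rw [hfil, card_singleton, if_neg (by omega)]; norm_num

lemma sw_refl (hn : 6 ≤ n) (h3 : 3 ∣ n) :
    ((n:ℝ)^2 + n/3) ≤ sw (seat7 n) (prefs7 n) (Equiv.refl _) := by
  have hswr : sw (seat7 n) (prefs7 n) (Equiv.refl _)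
      = n * ((n:ℝ)-1) + ((n:ℝ) + ((n/3 : ℕ) : ℝ)) := by
    rw [sw, Fintype.sum_sum_type]
    rw [Finset.sum_congr rfl (fun a _ => util_refl_inl hn a),
        Finset.sum_congr rfl (fun c _ => util_refl_inr hn h3 c)]
    rw [Finset.sum_const, card_univ, Fintype.card_fin, nsmul_eq_mul]
    congr 1
    have hsplit : ∀ c : Fin n, (if c.val % 3 = 1 then (2:ℝ) else 1)
        = 1 + (if c.val % 3 = 1 then (1:ℝ) else 0) := by
      intro c; split_ifs <;> norm_num
    rw [Finset.sum_congr rfl (fun c _ => hsplit c), Finset.sum_add_distrib, Finset.sum_const,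
      card_univ, Fintype.card_fin, nsmul_eq_mul, mul_one, Finset.sum_boole, card_res1 h3]
  rw [hswr]
  obtain ⟨m, rfl⟩ := h3
  rw [Nat.mul_div_cancel_left m (by norm_num)]
  push_cast
  ring_nf
  linarith

end PoF7

/-- for every `n ≥ 6` divisible by 3, in the above binary symmetric instance,
every maximin arrangement has social welfare `4n`, the maximum social welfare is at least
`n² + n/3`, and hence the price of fairness is at least `n/4 + 1/12`. -/
theorem pof_lower_bound_binary_symmetric (n : ℕ) (hn : 6 ≤ n) (h3 : 3 ∣ n) :
    (∀ p q : Fin n ⊕ Fin n, p ≠ q → prefs7 n p q = 0 ∨ prefs7 n p q = 1) ∧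
    (∀ p q : Fin n ⊕ Fin n, p ≠ q → prefs7 n p q = prefs7 n q p) ∧
    (∀ πf : (Fin n ⊕ Fin n) ≃ (Fin n ⊕ Fin n), maximin (seat7 n) (prefs7 n) πf →
      sw (seat7 n) (prefs7 n) πf = 4 * n) ∧
    (∃ π : (Fin n ⊕ Fin n) ≃ (Fin n ⊕ Fin n),
      (n : ℝ)^2 + n/3 ≤ sw (seat7 n) (prefs7 n) π) ∧
    (∀ πf πm : (Fin n ⊕ Fin n) ≃ (Fin n ⊕ Fin n),
      maximin (seat7 n) (prefs7 n) πf → maximum (seat7 n) (prefs7 n) πm →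
      ((n : ℝ)/4 + 1/12) * sw (seat7 n) (prefs7 n) πf ≤ sw (seat7 n) (prefs7 n) πm) := by
  refine ⟨?_, ?_, ?_, ?_, ?_⟩
  · intro p q _
    exact PoF7.prefs_mem p q
  · intro p q _
    rcases p with a|a <;> rcases q with b|b
    · rw [PoF7.prefs_ll, PoF7.prefs_ll]
      exact if_congr ne_comm rfl rfl
    · rfl
    · rfl
    · rw [PoF7.prefs_rr, PoF7.prefs_rr]
      exact if_congr or_comm rfl rfl
  · intro πf hm
    exact PoF7.sw_of_min2 hn h3 πf (PoF7.maximin_util_ge hn h3 πf hm)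
  · exact ⟨Equiv.refl _, PoF7.sw_refl hn h3⟩
  · intro πf πm hmf hmm
    have h4 : sw (seat7 n) (prefs7 n) πf = 4*n :=
      PoF7.sw_of_min2 hn h3 πf (PoF7.maximin_util_ge hn h3 πf hmf)
    have h5 : ((n:ℝ)^2 + n/3) ≤ sw (seat7 n) (prefs7 n) πm :=
      le_trans (PoF7.sw_refl hn h3) (hmm _)
    rw [h4]
    calc ((n:ℝ)/4 + 1/12) * (4*n) = (n:ℝ)^2 + n/3 := by ring
    _ ≤ _ := h5
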